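/- The generating function of the excedance number on G_{r,n} is symmetric: writing Σ_{π ∈ G_{r,n}} q^{exc(π)} = Σ_{i=0}^{rn−1} a_i q^i, one has a_i = a_{rn−1−i} for all 0 ≤ i ≤ rn−1. -/

import Mathlib

open Finset Polynomial

/-- The group of colored permutations `G_{r,n} = Z_r ≀ S_n`, realized as bijections of the
colored alphabet `Σ = [n] × {0,…,r-1}` commuting with the color shift. -/
def ColoredPerm (r n : ℕ) [NeZero r] : Type :=
  {π : Equiv.Perm (Fin n × Fin r) //
    ∀ x : Fin n × Fin r, π (x.1, x.2 + 1) = ((π x).1, (π x).2 + 1)}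

/-- The color order on the colored alphabet:
`1^[r-1] < ⋯ < n^[r-1] < ⋯ < 1^[0] < ⋯ < n^[0]` (higher color is smaller). -/
def colorLt {r n : ℕ} (x y : Fin n × Fin r) : Prop :=
  y.2 < x.2 ∨ (x.2 = y.2 ∧ x.1 < y.1)

/-- The excedance number `exc` of a colored permutation. -/
noncomputable def cExc {r n : ℕ} [NeZero r] (π : ColoredPerm r n) : ℕ :=
  Nat.card {x : Fin n × Fin r // colorLt x (π.1 x)}

/-- `exc_A(π) = |{i ∈ [n-1] : π(i) > i}|` (positions are the color-0 letters,
and `i ∈ [n-1]` corresponds to `i.val + 1 < n`). -/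
noncomputable def cExcA {r n : ℕ} [NeZero r] (π : ColoredPerm r n) : ℕ :=
  Nat.card {i : Fin n // i.val + 1 < n ∧ colorLt (i, 0) (π.1 (i, 0))}

/-- `csum(π)`: the sum of the colors appearing in the window notation of `π`. -/
def csum {r n : ℕ} [NeZero r] (π : ColoredPerm r n) : ℕ :=
  ∑ i : Fin n, (π.1 (i, 0)).2.val

/-! ### Generic counting helpers -/

instance {r n : ℕ} (x y : Fin n × Fin r) : Decidable (colorLt x y) := by
  unfold colorLt; infer_instance

lemma ncard_subtype {A : Type*} [Fintype A] (p : A → Prop) [DecidablePred p] :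
    Nat.card {x // p x} = (univ.filter p).card := by
  rw [Nat.card_eq_fintype_card, Fintype.card_subtype]

lemma ncard_prod {A B : Type*} [Fintype A] [Fintype B] (P : A → B → Prop) :
    Nat.card {x : A × B // P x.1 x.2} = ∑ a : A, Nat.card {b : B // P a b} := by
  classical
  rw [Nat.card_congr (Equiv.subtypeProdEquivSigmaSubtype P), Nat.card_eq_fintype_card,
    Fintype.card_sigma]
  exact Finset.sum_congr rfl fun a _ => (Nat.card_eq_fintype_card).symm

lemma card_range_filter_le (k m : ℕ) : ((range m).filter fun x => k ≤ x).card = m - k := by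
  induction m with
  | zero => simp
  | succ m ih =>
    rw [range_add_one, filter_insert]
    by_cases h : k ≤ m
    · rw [if_pos h, card_insert_of_notMem (by simp), ih]; omega
    · rw [if_neg h, ih]; omega

/-! ### Fin arithmetic helpers -/

lemma fin_add_lt_iff {r : ℕ} [NeZero r] (c α : Fin r) (hc : c ≠ 0) :
    c + α < α ↔ r ≤ c.val + α.val := by
  have hcv : c.val ≠ 0 := fun h => hc (Fin.ext h)
  have hc' := c.isLt
  have ha := α.isLt
  rw [Fin.lt_def, Fin.val_add]
  rcases Nat.lt_or_ge (c.val + α.val) r with h | h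
  · rw [Nat.mod_eq_of_lt h]; omega
  · have hm : (c.val + α.val) % r = c.val + α.val - r := by
      rw [Nat.mod_eq_sub_mod h]
      exact Nat.mod_eq_of_lt (by omega)
    rw [hm]; omega

lemma card_fin_add_lt {r : ℕ} [NeZero r] (c : Fin r) (hc : c ≠ 0) :
    ((univ : Finset (Fin r)).filter fun α => c + α < α).card = c.val := by
  have hc' := c.isLt
  have hcv : c.val ≠ 0 := fun h => hc (Fin.ext h)
  rw [filter_congr fun α _ => fin_add_lt_iff c α hc]
  have : ∀ α : Fin r, (r ≤ c.val + α.val) ↔ (r - c.val ≤ α.val) := by intro α; omega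
  rw [filter_congr fun α _ => this α]
  rw [Finset.card_filter, Fin.sum_univ_eq_sum_range (fun m => if r - c.val ≤ m then 1 else 0) r,
    ← Finset.card_filter, card_range_filter_le]
  omega

lemma fin_succ_wt {r : ℕ} [NeZero r] (x : Fin r) :
    (if x + (1 : Fin r) = 0 then r else (x + 1).val) = 1 + x.val := by
  have hx := x.isLt
  have hr : 1 ≤ r := Nat.pos_of_ne_zero (NeZero.ne r)
  rcases eq_or_lt_of_le hr with h1 | h2
  · -- r = 1
    subst h1
    have hx0 : x = 0 := Subsingleton.elim x 0
    subst hx0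
    simp
  · have h1r : (1 : Fin r).val = 1 := by rw [Fin.val_one']; exact Nat.mod_eq_of_lt h2
    have hvadd : (x + 1).val = (x.val + 1) % r := by rw [Fin.val_add, h1r]
    by_cases hx1 : x.val + 1 = r
    · have hv0 : (x + 1).val = 0 := by rw [hvadd, hx1, Nat.mod_self]
      have hz : x + 1 = 0 := Fin.ext (by simp [hv0])
      rw [if_pos hz]; omega
    · have hlt : x.val + 1 < r := by omega
      have hv : (x + 1).val = x.val + 1 := by rw [hvadd]; exact Nat.mod_eq_of_lt hlt
      have hz : x + 1 ≠ 0 := by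
        intro h; rw [h] at hv; simp at hv
      rw [if_neg hz, hv]; omega

/-! ### Structure of colored permutations -/

namespace ColoredPerm

variable {r n : ℕ} [NeZero r]

lemma shift (π : ColoredPerm r n) (i : Fin n) (α : Fin r) :
    π.1 (i, α + 1) = ((π.1 (i, α)).1, (π.1 (i, α)).2 + 1) := π.2 (i, α)

open Fin.NatCast in
lemma structural (π : ColoredPerm r n) (i : Fin n) (α : Fin r) :
    π.1 (i, α) = ((π.1 (i, 0)).1, (π.1 (i, 0)).2 + α) := by
  have key : ∀ m : ℕ, π.1 (i, (m : Fin r)) = ((π.1 (i, 0)).1, (π.1 (i, 0)).2 + (m : Fin r)) := by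
    intro m
    induction m with
    | zero => simp
    | succ m ih =>
      have hc : ((m + 1 : ℕ) : Fin r) = (m : Fin r) + 1 := by push_cast; ring
      rw [hc, shift, ih, ← add_assoc]
  have h := key α.val
  rwa [Fin.cast_val_eq_self] at h

lemma symm_shift (π : ColoredPerm r n) (x : Fin n × Fin r) :
    π.1.symm (x.1, x.2 + 1) = ((π.1.symm x).1, (π.1.symm x).2 + 1) := by
  apply π.1.injective
  rw [Equiv.apply_symm_apply, π.2 (π.1.symm x), Equiv.apply_symm_apply]

def inv (π : ColoredPerm r n) : ColoredPerm r n := ⟨π.1.symm, fun x => symm_shift π x⟩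

lemma aux_left (π : ColoredPerm r n) (i : Fin n) :
    (π.1.symm ((π.1 (i, 0)).1, 0)).1 = i := by
  have h : π.1 (i, -(π.1 (i, 0)).2) = ((π.1 (i, 0)).1, 0) := by
    rw [structural]; simp
  rw [← h, Equiv.symm_apply_apply]

def toσ (π : ColoredPerm r n) : Equiv.Perm (Fin n) where
  toFun i := (π.1 (i, 0)).1
  invFun j := (π.1.symm (j, 0)).1
  left_inv i := aux_left π i
  right_inv j := aux_left (inv π) j

def ofPairP (σ : Equiv.Perm (Fin n)) (c : Fin n → Fin r) : Equiv.Perm (Fin n × Fin r) where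
  toFun x := (σ x.1, c x.1 + x.2)
  invFun y := (σ.symm y.1, y.2 - c (σ.symm y.1))
  left_inv x := by simp
  right_inv y := by simp

def ofPair (σ : Equiv.Perm (Fin n)) (c : Fin n → Fin r) : ColoredPerm r n :=
  ⟨ofPairP σ c, by
    intro x
    show (σ x.1, c x.1 + (x.2 + 1)) = (σ x.1, c x.1 + x.2 + 1)
    rw [add_assoc]⟩

def pairEquiv (r n : ℕ) [NeZero r] :
    (Equiv.Perm (Fin n) × (Fin n → Fin r)) ≃ ColoredPerm r n where
  toFun p := ofPair p.1 p.2
  invFun π := (toσ π, fun i => (π.1 (i, 0)).2)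
  left_inv p := by
    obtain ⟨σ, c⟩ := p
    refine Prod.ext ?_ ?_
    · exact Equiv.ext fun i => rfl
    · funext i; show c i + 0 = c i; exact add_zero _
  right_inv π := by
    apply Subtype.ext; apply Equiv.ext; intro x
    show ((toσ π) x.1, (π.1 (x.1, 0)).2 + x.2) = π.1 x
    rw [structural π x.1 x.2]
    rfl

end ColoredPerm

/-! ### The excedance weight -/

namespace ColoredPerm

variable {r n : ℕ} [NeZero r]

def excP {n : ℕ} (σ : Equiv.Perm (Fin n)) : ℕ := (univ.filter fun i => i < σ i).card

def wt (σ : Equiv.Perm (Fin n)) (c : Fin n → Fin r) (i : Fin n) : ℕ :=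
  if c i = 0 then (if i < σ i then r else 0) else (c i).val

lemma card_colorLt (σ : Equiv.Perm (Fin n)) (c : Fin n → Fin r) (i : Fin n) :
    Nat.card {α : Fin r // colorLt (i, α) (σ i, c i + α)} = wt σ c i := by
  rw [ncard_subtype]
  unfold wt
  by_cases h0 : c i = 0
  · by_cases h : i < σ i
    · rw [if_pos h0, if_pos h]
      have : ∀ α : Fin r, colorLt (i, α) (σ i, c i + α) := by
        intro α; right; simp [h0, h]
      rw [filter_true_of_mem fun α _ => this α, card_univ, Fintype.card_fin]
    · rw [if_pos h0, if_neg h]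
      have : ∀ α : Fin r, ¬ colorLt (i, α) (σ i, c i + α) := by
        intro α hcon
        rcases hcon with hlt | ⟨_, hlt⟩
        · simp only [h0, zero_add] at hlt; exact lt_irrefl _ hlt
        · exact h hlt
      rw [filter_false_of_mem fun α _ => this α, card_empty]
  · rw [if_neg h0]
    have key : ∀ α : Fin r, colorLt (i, α) (σ i, c i + α) ↔ c i + α < α := by
      intro α
      constructor
      · rintro (hlt | ⟨heq, _⟩)
        · exact hlt
        · exact absurd (right_eq_add.mp heq) h0
      · intro hlt; exact Or.inl hlt
    rw [filter_congr fun α _ => key α]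
    exact card_fin_add_lt (c i) h0

lemma cExc_ofPair (σ : Equiv.Perm (Fin n)) (c : Fin n → Fin r) :
    cExc (ofPair σ c) = ∑ i, wt σ c i := by
  have h : cExc (ofPair σ c)
      = Nat.card {x : Fin n × Fin r // colorLt (x.1, x.2) (σ x.1, c x.1 + x.2)} := rfl
  rw [h, ncard_prod fun i α => colorLt (i, α) (σ i, c i + α)]
  exact Finset.sum_congr rfl fun i _ => card_colorLt σ c i

/-! ### Shifting the colors -/

lemma wt_shift_pt (σ : Equiv.Perm (Fin n)) (d : Fin n → Fin r) (i : Fin n) :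
    wt σ (fun i' => d i' + (if i' < σ i' then (1 : Fin r) else 0)) i
      = (if i < σ i then 1 else 0) + (d i).val := by
  unfold wt
  by_cases h : i < σ i
  · simp only [h, if_true]
    exact fin_succ_wt (d i)
  · simp only [h, if_false, add_zero, zero_add]
    by_cases hd : d i = 0 <;> simp [hd]

lemma excP_eq_sum (σ : Equiv.Perm (Fin n)) :
    excP σ = ∑ i : Fin n, (if i < σ i then 1 else 0) := by
  rw [excP, Finset.card_filter]

lemma wt_shift_sum (σ : Equiv.Perm (Fin n)) (d : Fin n → Fin r) :
    ∑ i, wt σ (fun i' => d i' + (if i' < σ i' then (1 : Fin r) else 0)) i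
      = excP σ + ∑ i, (d i).val := by
  rw [excP_eq_sum, ← Finset.sum_add_distrib]
  exact Finset.sum_congr rfl fun i _ => wt_shift_pt σ d i

/-! ### Color-sum counts -/

noncomputable def Dc (r n m : ℕ) [NeZero r] : ℕ := Nat.card {d : Fin n → Fin r // ∑ i, (d i).val = m}

noncomputable def Dg (r n e j : ℕ) [NeZero r] : ℕ :=
  Nat.card {d : Fin n → Fin r // e + ∑ i, (d i).val = j}

omit [NeZero r] in
lemma sum_val_le (d : Fin n → Fin r) : ∑ i, (d i).val ≤ (r - 1) * n := by
  calc ∑ i, (d i).val ≤ ∑ _i : Fin n, (r - 1) :=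
        Finset.sum_le_sum fun i _ => Nat.le_pred_of_lt (d i).isLt
    _ = (r - 1) * n := by rw [Finset.sum_const, card_univ, Fintype.card_fin, smul_eq_mul, Nat.mul_comm]

lemma Dg_of_lt {e j : ℕ} (h : j < e) : Dg r n e j = 0 := by
  have : IsEmpty {d : Fin n → Fin r // e + ∑ i, (d i).val = j} :=
    ⟨fun d => by have := d.2; omega⟩
  exact Nat.card_of_isEmpty

lemma Dg_of_le {e j : ℕ} (h : e ≤ j) : Dg r n e j = Dc r n (j - e) :=
  Nat.card_congr (Equiv.subtypeEquivRight fun d => by omega)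

lemma Dc_of_gt {m : ℕ} (h : (r - 1) * n < m) : Dc r n m = 0 := by
  have : IsEmpty {d : Fin n → Fin r // ∑ i, (d i).val = m} :=
    ⟨fun d => by have h1 := d.2; have h2 := sum_val_le (r := r) (n := n) d.1; omega⟩
  exact Nat.card_of_isEmpty

lemma Dc_reflect {m : ℕ} (h : m ≤ (r - 1) * n) : Dc r n m = Dc r n ((r - 1) * n - m) := by
  apply Nat.card_congr
  refine Equiv.subtypeEquiv (Equiv.piCongrRight fun _ => (Fin.revPerm : Equiv.Perm (Fin r)))
    fun d => ?_
  have hs : (∑ i, (d i).rev.val) + ∑ i, (d i).val = (r - 1) * n := by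
    rw [← Finset.sum_add_distrib]
    have hpt : ∀ i : Fin n, (d i).rev.val + (d i).val = r - 1 := fun i => by
      rw [Fin.val_rev]; have := (d i).isLt; omega
    rw [Finset.sum_congr rfl fun i _ => hpt i, Finset.sum_const, card_univ, Fintype.card_fin,
      smul_eq_mul, Nat.mul_comm]
  have happ : ∀ i : Fin n,
      ((Equiv.piCongrRight fun _ => (Fin.revPerm : Equiv.Perm (Fin r))) d i) = (d i).rev :=
    fun i => rfl
  simp only [happ]
  constructor <;> intro <;> omega

/-! ### Eulerian numbers via excedances -/

def En (n k : ℕ) : ℕ :=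
  ((univ : Finset (Equiv.Perm (Fin n))).filter fun σ => excP σ = k).card

omit [NeZero r] in
lemma excP_le {n : ℕ} (σ : Equiv.Perm (Fin (n + 1))) : excP σ ≤ n := by
  unfold excP
  have hsub : (univ.filter fun i => i < σ i) ⊆ univ.erase (Fin.last n) := by
    intro i hi
    rw [mem_filter] at hi
    rw [mem_erase]
    refine ⟨?_, mem_univ _⟩
    intro hl
    rw [hl] at hi
    exact absurd (Fin.le_last (σ (Fin.last n))) (not_le.mpr hi.2)
  calc (univ.filter fun i => i < σ i).card ≤ (univ.erase (Fin.last n)).card :=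
        card_le_card hsub
    _ = n := by rw [card_erase_of_mem (mem_univ _), card_univ, Fintype.card_fin]; omega

omit [NeZero r] in
lemma En_eq_zero {n k : ℕ} (h : n < k) : En (n + 1) k = 0 := by
  rw [En, Finset.card_eq_zero, Finset.filter_eq_empty_iff]
  intro σ _
  have := excP_le σ
  omega

omit [NeZero r] in
lemma excP_decompose_zero {n : ℕ} (e : Equiv.Perm (Fin n)) :
    excP (Equiv.Perm.decomposeFin.symm (0, e)) = excP e := by
  unfold excP
  rw [Finset.card_filter, Finset.card_filter, Fin.sum_univ_succ]
  rw [Equiv.Perm.decomposeFin_symm_apply_zero]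
  simp only [lt_irrefl, if_false]
  rw [zero_add]
  apply Finset.sum_congr rfl
  intro i _
  rw [Equiv.Perm.decomposeFin_symm_apply_succ]
  simp [Equiv.swap_self, Fin.succ_lt_succ_iff]

omit [NeZero r] in
lemma excP_decompose_succ {n : ℕ} (e : Equiv.Perm (Fin n)) (q : Fin n) :
    excP (Equiv.Perm.decomposeFin.symm (q.succ, e))
      = 1 + (univ.filter fun i => i < e i ∧ e i ≠ q).card := by
  unfold excP
  rw [Finset.card_filter, Fin.sum_univ_succ, Finset.card_filter]
  rw [Equiv.Perm.decomposeFin_symm_apply_zero]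
  rw [if_pos (Fin.succ_pos q)]
  congr 1
  apply Finset.sum_congr rfl
  intro i _
  rw [Equiv.Perm.decomposeFin_symm_apply_succ]
  by_cases hq : e i = q
  · rw [hq, Equiv.swap_apply_right]
    simp [hq]
  · rw [Equiv.swap_apply_of_ne_of_ne (Fin.succ_ne_zero _) (fun hc => hq (Fin.succ_injective _ hc))]
    simp [Fin.succ_lt_succ_iff, hq]

omit [NeZero r] in
lemma count_p {n : ℕ} (e : Equiv.Perm (Fin n)) (j : ℕ) :
    ((univ : Finset (Fin (n + 1))).filter fun p =>
        excP (Equiv.Perm.decomposeFin.symm (p, e)) = j).card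
      = (if excP e = j then excP e + 1 else 0) + (if excP e + 1 = j then n - excP e else 0) := by
  classical
  set k := excP e with hk
  set T : Finset (Fin n) := (univ.filter fun i => i < e i).image e with hT
  have hfk : ((univ : Finset (Fin n)).filter fun i => i < e i).card = k := by rw [hk]; rfl
  have hTcard : T.card = k := by
    rw [hT, Finset.card_image_of_injective _ e.injective, hfk]
  have hTle : T.card ≤ n := le_trans (Finset.card_le_card (Finset.subset_univ T))
    (by rw [card_univ, Fintype.card_fin])
  have hA : ∀ q : Fin n, ((univ : Finset (Fin n)).filter fun i => i < e i ∧ e i ≠ q).card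
      = if q ∈ T then k - 1 else k := by
    intro q
    by_cases hqT : q ∈ T
    · rw [if_pos hqT]
      obtain ⟨i0, hi0mem, hi0⟩ := Finset.mem_image.mp hqT
      rw [mem_filter] at hi0mem
      have heq : ((univ : Finset (Fin n)).filter fun i => i < e i ∧ e i ≠ q)
          = ((univ : Finset (Fin n)).filter fun i => i < e i).erase i0 := by
        ext i
        simp only [mem_filter, mem_erase, mem_univ, true_and]
        constructor
        · rintro ⟨h1, h2⟩
          exact ⟨fun hc => h2 (hc ▸ hi0), h1⟩
        · rintro ⟨h1, h2⟩
          exact ⟨h2, fun hc => h1 (e.injective (hc.trans hi0.symm))⟩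
      rw [heq, Finset.card_erase_of_mem (by rw [mem_filter]; exact ⟨mem_univ _, hi0mem.2⟩), hfk]
    · rw [if_neg hqT]
      congr 1
      apply Finset.filter_congr
      intro i _
      constructor
      · exact fun h => h.1
      · intro h
        refine ⟨h, fun hc => hqT ?_⟩
        exact Finset.mem_image.mpr ⟨i, mem_filter.mpr ⟨mem_univ _, h⟩, hc⟩
  have hTpos : T.Nonempty → 1 ≤ k := by
    rintro ⟨q, hq⟩
    rw [hT] at hq
    obtain ⟨i0, hi0mem, _⟩ := Finset.mem_image.mp hq
    have : 0 < ((univ : Finset (Fin n)).filter fun i => i < e i).card :=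
      Finset.card_pos.mpr ⟨i0, hi0mem⟩
    omega
  rw [Finset.card_filter, Fin.sum_univ_succ]
  rw [excP_decompose_zero, ← hk]
  have hterm : ∀ q : Fin n,
      (if excP (Equiv.Perm.decomposeFin.symm (q.succ, e)) = j then 1 else 0)
        = if 1 + (if q ∈ T then k - 1 else k) = j then 1 else 0 := by
    intro q
    rw [excP_decompose_succ, hA q]
  rw [Finset.sum_congr rfl fun q _ => hterm q]
  rw [← Finset.sum_sdiff (Finset.subset_univ T)]
  have hsum1 : ∑ q ∈ T, (if 1 + (if q ∈ T then k - 1 else k) = j then 1 else 0)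
      = k * (if k = j then 1 else 0) := by
    by_cases hTne : T.Nonempty
    · have hk1 := hTpos hTne
      rw [Finset.sum_congr rfl (fun q hq => by
        rw [if_pos hq, (by omega : 1 + (k - 1) = k)])]
      rw [Finset.sum_const, hTcard, smul_eq_mul]
    · rw [Finset.not_nonempty_iff_eq_empty] at hTne
      rw [hTne, Finset.sum_empty]
      rw [hTne] at hTcard
      simp at hTcard
      rw [← hTcard, Nat.zero_mul]
  have hsum2 : ∑ q ∈ (univ : Finset (Fin n)) \ T,
      (if 1 + (if q ∈ T then k - 1 else k) = j then 1 else 0)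
      = (n - k) * (if k + 1 = j then 1 else 0) := by
    rw [Finset.sum_congr rfl (fun q hq => by
      rw [if_neg (Finset.mem_sdiff.mp hq).2, (by omega : 1 + k = k + 1)])]
    rw [Finset.sum_const, Finset.card_sdiff_of_subset (Finset.subset_univ T), card_univ, Fintype.card_fin,
      hTcard, smul_eq_mul]
  rw [hsum2, hsum1]
  by_cases h1 : k = j <;> by_cases h2 : k + 1 = j <;> simp [h1, h2] <;> omega

omit [NeZero r] in
lemma En_succ (n j : ℕ) :
    En (n + 1) j = (if j = 0 then En n 0 else
      (j + 1) * En n j + (n - (j - 1)) * En n (j - 1)) := by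
  classical
  have h1 : En (n + 1) j
      = Nat.card {π : Equiv.Perm (Fin (n + 1)) // excP π = j} := by
    rw [ncard_subtype]; rfl
  have h2 : Nat.card {π : Equiv.Perm (Fin (n + 1)) // excP π = j}
      = Nat.card {p : Fin (n + 1) × Equiv.Perm (Fin n) //
          excP (Equiv.Perm.decomposeFin.symm p) = j} :=
    (Nat.card_congr (Equiv.subtypeEquiv (Equiv.Perm.decomposeFin.symm) fun p => Iff.rfl)).symm
  have h3 : Nat.card {p : Fin (n + 1) × Equiv.Perm (Fin n) //
        excP (Equiv.Perm.decomposeFin.symm p) = j}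
      = ∑ e : Equiv.Perm (Fin n),
          Nat.card {p : Fin (n + 1) // excP (Equiv.Perm.decomposeFin.symm (p, e)) = j} := by
    rw [Nat.card_congr (Equiv.subtypeEquiv (Equiv.prodComm (Fin (n + 1)) (Equiv.Perm (Fin n)))
      (fun x => Iff.rfl) : {p : Fin (n + 1) × Equiv.Perm (Fin n) //
          excP (Equiv.Perm.decomposeFin.symm p) = j}
        ≃ {y : Equiv.Perm (Fin n) × Fin (n + 1) //
          excP (Equiv.Perm.decomposeFin.symm (y.2, y.1)) = j})]
    exact ncard_prod fun (e : Equiv.Perm (Fin n)) (p : Fin (n + 1)) =>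
      excP (Equiv.Perm.decomposeFin.symm (p, e)) = j
  rw [h1, h2, h3]
  have h4 : ∀ e : Equiv.Perm (Fin n),
      Nat.card {p : Fin (n + 1) // excP (Equiv.Perm.decomposeFin.symm (p, e)) = j}
        = (if excP e = j then excP e + 1 else 0) + (if excP e + 1 = j then n - excP e else 0) := by
    intro e
    rw [ncard_subtype]
    exact count_p e j
  rw [Finset.sum_congr rfl fun e _ => h4 e, Finset.sum_add_distrib]
  have hfst : ∑ e : Equiv.Perm (Fin n), (if excP e = j then excP e + 1 else 0)
      = (j + 1) * En n j := by
    rw [← Finset.sum_filter]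
    rw [Finset.sum_congr rfl (fun e he => by rw [(Finset.mem_filter.mp he).2])]
    rw [Finset.sum_const, smul_eq_mul, Nat.mul_comm]; rfl
  have hsnd : ∑ e : Equiv.Perm (Fin n), (if excP e + 1 = j then n - excP e else 0)
      = if j = 0 then 0 else (n - (j - 1)) * En n (j - 1) := by
    by_cases hj : j = 0
    · rw [if_pos hj]
      subst hj
      apply Finset.sum_eq_zero
      intro e _
      rw [if_neg (by omega)]
    · rw [if_neg hj]
      have hite : ∀ e : Equiv.Perm (Fin n), (if excP e + 1 = j then n - excP e else 0)
          = (if excP e = j - 1 then n - (j - 1) else 0) := by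
        intro e
        by_cases h : excP e + 1 = j
        · rw [if_pos h, if_pos (by omega)]
          congr 1
          omega
        · rw [if_neg h, if_neg (by omega)]
      rw [Finset.sum_congr rfl fun e _ => hite e]
      rw [← Finset.sum_filter]
      rw [Finset.sum_const, smul_eq_mul, Nat.mul_comm]; rfl
  rw [hfst, hsnd]
  by_cases hj : j = 0
  · subst hj; simp
  · rw [if_neg hj, if_neg hj]

omit [NeZero r] in
lemma En_succ_zero (n : ℕ) : En (n + 1) 0 = En n 0 := by rw [En_succ]; simp

omit [NeZero r] in
lemma En_succ_succ (n m : ℕ) :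
    En (n + 1) (m + 1) = (m + 2) * En n (m + 1) + (n - m) * En n m := by
  rw [En_succ]
  simp only [Nat.succ_ne_zero, if_false, Nat.add_sub_cancel]

omit [NeZero r] in
lemma En_symm : ∀ n k : ℕ, k ≤ n → En (n + 1) k = En (n + 1) (n - k) := by
  intro n
  induction n with
  | zero =>
    intro k hk
    have hk0 : k = 0 := by omega
    subst hk0
    rfl
  | succ n ih =>
    intro k hk
    match k with
    | 0 =>
      rw [Nat.sub_zero, En_succ_zero]
      have h1 : En (n + 1 + 1) (n + 1) = (n + 2) * En (n + 1) (n + 1) + (n + 1 - n) * En (n + 1) n :=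
        En_succ_succ (n + 1) n
      rw [h1, En_eq_zero (n := n) (k := n + 1) (by omega), Nat.mul_zero, Nat.zero_add,
        (by omega : n + 1 - n = 1), Nat.one_mul]
      have h0 := ih 0 (Nat.zero_le n)
      rw [Nat.sub_zero] at h0
      exact h0
    | Nat.succ m =>
      have hm : m ≤ n := by omega
      have hL : En (n + 1 + 1) (m + 1) = (m + 2) * En (n + 1) (m + 1) + (n + 1 - m) * En (n + 1) m :=
        En_succ_succ (n + 1) m
      rcases Nat.eq_or_lt_of_le hm with hEq | hLt
      · -- m = n : target is En (n+2) 0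
        subst hEq
        rw [(by omega : m + 1 - (m + 1) = 0), En_succ_zero, hL]
        rw [En_eq_zero (n := m) (k := m + 1) (by omega), Nat.mul_zero, Nat.zero_add,
          (by omega : m + 1 - m = 1), Nat.one_mul]
        have := ih m (le_refl m)
        rw [(by omega : m - m = 0)] at this
        omega
      · -- m < n
        obtain ⟨t, ht⟩ : ∃ t, n - m = t + 1 := ⟨n - m - 1, by omega⟩
        rw [(by omega : n + 1 - (m + 1) = t + 1)]
        have hR : En (n + 1 + 1) (t + 1) = (t + 2) * En (n + 1) (t + 1) + (n + 1 - t) * En (n + 1) t :=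
          En_succ_succ (n + 1) t
        have iht1 : En (n + 1) (t + 1) = En (n + 1) m := by
          have := ih (t + 1) (by omega)
          rw [(by omega : n - (t + 1) = m)] at this
          exact this
        have iht : En (n + 1) t = En (n + 1) (m + 1) := by
          have := ih t (by omega)
          rw [(by omega : n - t = m + 1)] at this
          exact this
        rw [hL, hR, iht1, iht, (by omega : t + 2 = n + 1 - m), (by omega : n + 1 - t = m + 2)]
        omega

/-! ### Assembling the count -/

lemma card_W (σ : Equiv.Perm (Fin n)) (j : ℕ) :
    Nat.card {c : Fin n → Fin r // ∑ i, wt σ c i = j} = Dg r n (excP σ) j := by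
  refine (Nat.card_congr (Equiv.subtypeEquiv
    (Equiv.piCongrRight fun i => Equiv.addRight (if i < σ i then (1 : Fin r) else 0))
    (fun d => ?_))).symm
  have happ : ∀ i : Fin n,
      ((Equiv.piCongrRight fun i => Equiv.addRight (if i < σ i then (1 : Fin r) else 0)) d) i
        = d i + (if i < σ i then (1 : Fin r) else 0) := fun i => rfl
  constructor
  · intro h
    rw [Finset.sum_congr rfl fun i _ => congrArg (wt σ _) (rfl : i = i)]
    calc ∑ i, wt σ (fun i' => ((Equiv.piCongrRight fun i => Equiv.addRight
          (if i < σ i then (1 : Fin r) else 0)) d) i') i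
        = ∑ i, wt σ (fun i' => d i' + (if i' < σ i' then (1 : Fin r) else 0)) i := by
          apply Finset.sum_congr rfl
          intro i _
          congr 1
      _ = excP σ + ∑ i, (d i).val := wt_shift_sum σ d
      _ = j := h
  · intro h
    rw [← h]
    calc excP σ + ∑ i, (d i).val
        = ∑ i, wt σ (fun i' => d i' + (if i' < σ i' then (1 : Fin r) else 0)) i :=
          (wt_shift_sum σ d).symm
      _ = ∑ i, wt σ (fun i' => ((Equiv.piCongrRight fun i => Equiv.addRight
          (if i < σ i then (1 : Fin r) else 0)) d) i') i := by
          apply Finset.sum_congr rfl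
          intro i _
          congr 1

lemma N_eq (r n : ℕ) [NeZero r] (hn : 1 ≤ n) (j : ℕ) :
    Nat.card {π : ColoredPerm r n // cExc π = j}
      = ∑ e ∈ range n, En n e * Dg r n e j := by
  classical
  have h1 : Nat.card {π : ColoredPerm r n // cExc π = j}
      = Nat.card {p : Equiv.Perm (Fin n) × (Fin n → Fin r) //
          ∑ i, wt p.1 p.2 i = j} := by
    refine (Nat.card_congr (Equiv.subtypeEquiv (pairEquiv r n) (fun p => ?_))).symm
    rw [show pairEquiv r n p = ofPair p.1 p.2 from rfl, cExc_ofPair]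
  rw [h1, ncard_prod fun (σ : Equiv.Perm (Fin n)) (c : Fin n → Fin r) => ∑ i, wt σ c i = j]
  rw [Finset.sum_congr rfl fun σ _ => card_W σ j]
  have hmap : ∀ σ : Equiv.Perm (Fin n), σ ∈ (univ : Finset (Equiv.Perm (Fin n))) →
      excP σ ∈ range n := by
    intro σ _
    rw [mem_range]
    obtain ⟨m, rfl⟩ : ∃ m, n = m + 1 := ⟨n - 1, by omega⟩
    exact Nat.lt_succ_of_le (excP_le σ)
  rw [← Finset.sum_fiberwise_of_maps_to hmap (fun σ => Dg r n (excP σ) j)]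
  apply Finset.sum_congr rfl
  intro e _
  rw [Finset.sum_congr rfl (fun σ hσ => by
    rw [(Finset.mem_filter.mp hσ).2] : ∀ σ ∈ _, Dg r n (excP σ) j = Dg r n e j)]
  rw [Finset.sum_const, smul_eq_mul]
  rfl

lemma Dg_reflect (r n : ℕ) [NeZero r] (hn : 1 ≤ n) (e i : ℕ) (he : e ≤ n - 1)
    (hi : i ≤ r * n - 1) :
    Dg r n (n - 1 - e) (r * n - 1 - i) = Dg r n e i := by
  have hr : 1 ≤ r := Nat.pos_of_ne_zero (NeZero.ne r)
  have hM : (r - 1) * n = r * n - n := Nat.sub_one_mul r n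
  have hn' : n ≤ r * n := Nat.le_mul_of_pos_left n hr
  rcases Nat.lt_or_ge i e with hie | hie
  · rw [Dg_of_lt hie, Dg_of_le (by omega), Dc_of_gt (by omega)]
  rcases Nat.lt_or_ge (e + (r - 1) * n) i with hbig | hok
  · rw [Dg_of_le hie, Dc_of_gt (by omega), Dg_of_lt (by omega)]
  · rw [Dg_of_le hie, Dg_of_le (by omega),
      (by omega : r * n - 1 - i - (n - 1 - e) = (r - 1) * n - (i - e)),
      ← Dc_reflect (by omega)]

end ColoredPerm

/-- Symmetry of the generating function of the excedance number on `G_{r,n}`: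
writing `Σ_{π ∈ G_{r,n}} q^{exc(π)} = Σ_{i=0}^{rn−1} a_i q^i`, one has
`a_i = a_{rn−1−i}` for all `0 ≤ i ≤ rn−1`. -/
theorem exc_generating_symmetric (r n : ℕ) [NeZero r] (hn : 1 ≤ n) (i : ℕ)
    (hi : i ≤ r * n - 1) :
    Nat.card {π : ColoredPerm r n // cExc π = i} =
      Nat.card {π : ColoredPerm r n // cExc π = r * n - 1 - i} := by
  have hr : 1 ≤ r := Nat.pos_of_ne_zero (NeZero.ne r)
  rw [ColoredPerm.N_eq r n hn i, ColoredPerm.N_eq r n hn (r * n - 1 - i)]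
  conv_rhs => rw [← Finset.sum_range_reflect]
  apply Finset.sum_congr rfl
  intro e he
  rw [Finset.mem_range] at he
  obtain ⟨m, rfl⟩ : ∃ m, n = m + 1 := ⟨n - 1, by omega⟩
  have hE : ColoredPerm.En (m + 1) (m + 1 - 1 - e) = ColoredPerm.En (m + 1) e := by
    rw [(by omega : m + 1 - 1 - e = m - e)]
    exact (ColoredPerm.En_symm m e (by omega)).symm
  rw [hE]
  congr 1
  exact (ColoredPerm.Dg_reflect r (m + 1) hn e i (by omega) hi).symm
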